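/- Let H, H₁, H₂ be Hilbert spaces, T₁ : D(T₁) ⊆ H₁ → H a closed densely defined operator, T₂ : D(T₂) ⊆ H → H₂ densely defined with D(T₁*) = D(T₂), and suppose ‖T₁* f‖₁ ≤ λ‖T₂ f‖₂ for all f ∈ D(T₁*) and some λ > 0. Then there exists a bounded operator U : H₁ → H₂ such that T₁ = T₂* U (i.e., for all x ∈ D(T₁), Ux ∈ D(T₂*) and T₂*(Ux) = T₁x). -/

import Mathlib

open scoped ComplexInnerProductSpace

/-- Let `H, H₁, H₂` be Hilbert spaces, `T₁ : D(T₁) ⊆ H₁ → H` a closed densely defined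
operator, `T₂ : D(T₂) ⊆ H → H₂` densely defined with `D(T₁*) = D(T₂)`, and suppose
`‖T₁* f‖₁ ≤ λ‖T₂ f‖₂` for all `f ∈ D(T₁*)` and some `λ > 0`. Then there exists a bounded
operator `U : H₁ → H₂` such that `T₁ = T₂* U`. -/
theorem stmt_5 {H H₁ H₂ : Type*}
    [NormedAddCommGroup H] [InnerProductSpace ℂ H] [CompleteSpace H]
    [NormedAddCommGroup H₁] [InnerProductSpace ℂ H₁] [CompleteSpace H₁]
    [NormedAddCommGroup H₂] [InnerProductSpace ℂ H₂] [CompleteSpace H₂]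
    (T₁ : H₁ →ₗ.[ℂ] H) (hT₁c : T₁.IsClosed) (hT₁d : Dense (T₁.domain : Set H₁))
    (T₂ : H →ₗ.[ℂ] H₂) (hT₂d : Dense (T₂.domain : Set H))
    (hdom : T₁.adjoint.domain = T₂.domain)
    (lam : ℝ) (hlam : 0 < lam)
    (hle : ∀ (f : H) (h1 : f ∈ T₁.adjoint.domain) (h2 : f ∈ T₂.domain),
      ‖T₁.adjoint ⟨f, h1⟩‖ ≤ lam * ‖T₂ ⟨f, h2⟩‖) :
    ∃ U : H₁ →L[ℂ] H₂, ∀ x : T₁.domain,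
      ∃ hm : U (x : H₁) ∈ T₂.adjoint.domain, T₂.adjoint ⟨U (x : H₁), hm⟩ = T₁ x := by
  classical
  -- The map `f ↦ T₁† f` viewed on `T₂.domain`
  set e : (T₂.domain : Submodule ℂ H) ≃ₗ[ℂ] T₁.adjoint.domain :=
    LinearEquiv.ofEq _ _ hdom.symm with he
  set A : T₂.domain →ₗ[ℂ] H₁ := T₁.adjoint.toFun.comp e.toLinearMap with hA
  set B : T₂.domain →ₗ[ℂ] H₂ := T₂.toFun with hB
  have hAB : ∀ f : T₂.domain, ‖A f‖ ≤ lam * ‖B f‖ := by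
    intro f
    have h1 : (f : H) ∈ T₁.adjoint.domain := hdom.symm ▸ f.2
    have := hle (f : H) h1 f.2
    have hAf : A f = T₁.adjoint ⟨(f : H), h1⟩ := rfl
    have hBf : B f = T₂ ⟨(f : H), f.2⟩ := by
      simp only [hB]; congr
    rw [hAf, hBf]; exact this
  have hker : LinearMap.ker B ≤ LinearMap.ker A := by
    intro f hf
    rw [LinearMap.mem_ker] at hf ⊢
    have := hAB f
    rw [hf, norm_zero, mul_zero] at this
    exact norm_le_zero_iff.mp this
  -- a bounded map on the range of `B`
  set C₁ : (LinearMap.range B : Submodule ℂ H₂) →ₗ[ℂ] H₁ :=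
    ((LinearMap.ker B).liftQ A hker).comp B.quotKerEquivRange.symm.toLinearMap with hC₁def
  have hC₁ : ∀ f : T₂.domain, C₁ ⟨B f, LinearMap.mem_range_self B f⟩ = A f := by
    intro f
    have h1 : B.quotKerEquivRange (Submodule.Quotient.mk f)
        = ⟨B f, LinearMap.mem_range_self B f⟩ := Subtype.ext (B.quotKerEquivRange_apply_mk f)
    have h2 : B.quotKerEquivRange.symm ⟨B f, LinearMap.mem_range_self B f⟩
        = Submodule.Quotient.mk f := by
      rw [← h1, LinearEquiv.symm_apply_apply]
    simp only [hC₁def, LinearMap.comp_apply, LinearEquiv.coe_toLinearMap, h2]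
    rfl
  have hbound : ∀ y : (LinearMap.range B : Submodule ℂ H₂), ‖C₁ y‖ ≤ lam * ‖y‖ := by
    rintro ⟨y, hy⟩
    obtain ⟨f, rfl⟩ := hy
    have : (⟨B f, LinearMap.mem_range_self B f⟩ : LinearMap.range B)
        = ⟨B f, ⟨f, rfl⟩⟩ := rfl
    rw [← this, hC₁ f]
    simpa using hAB f
  set C₂ : (LinearMap.range B : Submodule ℂ H₂) →L[ℂ] H₁ :=
    C₁.mkContinuous lam hbound with hC₂def
  -- extend to the closure of the range
  set K : Submodule ℂ H₂ := (LinearMap.range B).topologicalClosure with hK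
  haveI : CompleteSpace K := (Submodule.isClosed_topologicalClosure _).completeSpace_coe
  have hle' : LinearMap.range B ≤ K := Submodule.le_topologicalClosure _
  set ι : (LinearMap.range B : Submodule ℂ H₂) →ₗ[ℂ] K := Submodule.inclusion hle' with hι
  have hιnorm : ∀ y, ‖ι y‖ = ‖y‖ := fun y => rfl
  set ιc : (LinearMap.range B : Submodule ℂ H₂) →L[ℂ] K :=
    ι.mkContinuous 1 (fun y => by rw [hιnorm, one_mul]) with hιc
  have hisom : Isometry ιc := AddMonoidHomClass.isometry_of_norm _ hιnorm
  have hdr : DenseRange ιc := by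
    intro y
    rw [closure_subtype]
    have himg : Subtype.val '' Set.range ιc = (LinearMap.range B : Set H₂) := by
      ext z
      constructor
      · rintro ⟨w, ⟨v, rfl⟩, rfl⟩; exact v.2
      · rintro hz; exact ⟨ιc ⟨z, hz⟩, ⟨⟨z, hz⟩, rfl⟩, rfl⟩
    rw [himg]
    exact y.2
  set Cext : K →L[ℂ] H₁ := C₂.extend ιc with hCext
  set C : H₂ →L[ℂ] H₁ := Cext.comp (K.orthogonalProjectionOnto) with hC
  have hCkey : ∀ f : T₂.domain, C (B f) = A f := by
    intro f
    have hmemK : B f ∈ K := hle' (LinearMap.mem_range_self B f)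
    have hproj : K.orthogonalProjectionOnto (B f) = ⟨B f, hmemK⟩ :=
      Subtype.ext (K.starProjection_eq_self_iff.mpr hmemK)
    have hinc : ιc ⟨B f, LinearMap.mem_range_self B f⟩ = ⟨B f, hmemK⟩ := rfl
    rw [hC, ContinuousLinearMap.comp_apply, hproj, ← hinc, hCext,
      ContinuousLinearMap.extend_eq _ hdr hisom.isUniformInducing, hC₂def]
    exact hC₁ f
  refine ⟨ContinuousLinearMap.adjoint C, fun x => ?_⟩
  set u : H₂ := ContinuousLinearMap.adjoint C (x : H₁) with hu
  have hx₀ : ∀ f : T₂.domain, ⟪(T₁ x : H), (f : H)⟫ = ⟪u, T₂ f⟫ := by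
    intro f
    have h1 : ⟪u, T₂ f⟫ = ⟪(x : H₁), C (T₂ f)⟫ :=
      ContinuousLinearMap.adjoint_inner_left C (T₂ f) (x : H₁)
    have h2 : C (T₂ f) = T₁.adjoint (e f) := hCkey f
    have h3 : ⟪T₁.adjoint (e f), (x : H₁)⟫ = ⟪((e f : H)), T₁ x⟫ :=
      LinearPMap.adjoint_isFormalAdjoint hT₁d (e f) x
    have h4 : ((e f : H)) = (f : H) := rfl
    rw [h1, h2, ← inner_conj_symm, ← h4, ← h3, inner_conj_symm]
  refine ⟨LinearPMap.mem_adjoint_domain_of_exists _ ⟨T₁ x, fun f => hx₀ f⟩, ?_⟩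
  exact LinearPMap.adjoint_apply_eq hT₂d _ (fun f => hx₀ f)
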